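/- The image of the Lau product A ×_φ B under ψ(a,b) = (a + φ(b)·1, b) inside A¹ ⊕_alg B is in general not a two-sided ideal: there exist Banach algebras A, B and a character φ such that ψ(A ×_φ B) is not an ideal of A¹ ⊕_alg B. -/

import Mathlib

/-- The image of the Lau product `A ×_φ B` under
`ψ(a,b) = (a + φ(b)·1, b)` inside `A¹ ⊕_alg B` is in general not a two-sided ideal:
there exist Banach algebras `A`, `B` and a character `φ` such that
`ψ(A ×_φ B)` is not an ideal of `A¹ ⊕_alg B`. -/
theorem lau_image_not_ideal :
    ∃ (A : Type) (_ : NonUnitalNormedRing A) (_ : NormedSpace ℂ A)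
      (_ : IsScalarTower ℂ A A) (_ : SMulCommClass ℂ A A) (_ : CompleteSpace A)
      (B : Type) (_ : NonUnitalNormedRing B) (_ : NormedSpace ℂ B)
      (_ : IsScalarTower ℂ B B) (_ : SMulCommClass ℂ B B) (_ : CompleteSpace B)
      (φ : B →ₙₐ[ℂ] ℂ), Continuous φ ∧ φ ≠ 0 ∧
      (letI ψ : A × B → Unitization ℂ A × B := fun x =>
        ((x.1 : Unitization ℂ A) + φ x.2 • (1 : Unitization ℂ A), x.2)
       ¬ (∀ x ∈ Set.range ψ, ∀ y : Unitization ℂ A × B,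
            y * x ∈ Set.range ψ ∧ x * y ∈ Set.range ψ)) := by
  refine ⟨ℂ, inferInstance, inferInstance, inferInstance, inferInstance, inferInstance,
    ℂ, inferInstance, inferInstance, inferInstance, inferInstance, inferInstance,
    NonUnitalAlgHom.id ℂ ℂ, continuous_id, ?_, ?_⟩
  · intro h
    have := congrArg (fun f => f 1) h
    simp at this
  · intro h
    have hx : ((1 : Unitization ℂ ℂ), (1 : ℂ)) ∈ Set.range
        (fun x : ℂ × ℂ => ((x.1 : Unitization ℂ ℂ) + (x.2 : ℂ) • (1 : Unitization ℂ ℂ), x.2)) := by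
      exact ⟨(0, 1), by simp⟩
    obtain ⟨-, h2⟩ := h _ hx ((1 : Unitization ℂ ℂ), (0 : ℂ))
    obtain ⟨⟨a, b⟩, hab⟩ := h2
    have h1 : (a : Unitization ℂ ℂ) + (b : ℂ) • (1 : Unitization ℂ ℂ) = 1 := by
      have := congrArg Prod.fst hab
      simpa using this
    have hb : b = 0 := by
      have := congrArg Prod.snd hab
      simpa using this
    rw [hb] at h1
    have := congrArg (fun x : Unitization ℂ ℂ => x.fst) h1
    simp at this
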